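/- Let γ ∈ (0,1), (Q_n)_{n≥1} iid nonnegative random variables, σ an integrable stopping time, and Q(γ) := Σ_{k=1}^σ γ^{σ-k} Q_k. If lim_{t→∞} t·P(log Q₁ > t) = s ∈ [0,∞], then lim_{t→∞} t·P(log Q(γ) > t) = s·E[σ]. -/

import Mathlib

open MeasureTheory ProbabilityTheory Filter Set
open scoped ENNReal

-- Bonferroni lower bound
lemma bonferroni {Ω : Type*} [MeasurableSpace Ω] (μ : Measure Ω)
    (A : ℕ → Set Ω) (hA : ∀ k, MeasurableSet (A k)) (n : ℕ) :
    ∑ k ∈ Finset.range n, μ (A k) ≤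
      μ (⋃ k ∈ Finset.range n, A k) +
        ∑ k ∈ Finset.range n, ∑ j ∈ Finset.range k, μ (A j ∩ A k) := by
  induction n with
  | zero => simp
  | succ n ih =>
    rw [Finset.sum_range_succ, Finset.sum_range_succ]
    have h1 : μ (⋃ k ∈ Finset.range n, A k) + μ (A n) =
        μ ((⋃ k ∈ Finset.range n, A k) ∪ A n) + μ ((⋃ k ∈ Finset.range n, A k) ∩ A n) :=
      (measure_union_add_inter _ (hA n)).symm
    have h2 : μ ((⋃ k ∈ Finset.range n, A k) ∩ A n) ≤ ∑ j ∈ Finset.range n, μ (A j ∩ A n) := by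
      rw [Set.iUnion₂_inter]
      exact (measure_biUnion_finset_le _ _).trans (le_of_eq rfl)
    have h3 : μ ((⋃ k ∈ Finset.range n, A k) ∪ A n) = μ (⋃ k ∈ Finset.range (n+1), A k) := by
      congr 1
      ext ω; simp [Finset.mem_range, Nat.lt_succ_iff_lt_or_eq]
      constructor
      · rintro (⟨k,hk,h⟩|h); exact ⟨k, hk.le, h⟩; exact ⟨n, le_refl n, h⟩
      · rintro ⟨k, hk, h⟩; rcases Nat.lt_or_eq_of_le hk with hk|rfl; exact Or.inl ⟨k,hk,h⟩; exact Or.inr h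
    calc ∑ k ∈ Finset.range n, μ (A k) + μ (A n)
        ≤ (μ (⋃ k ∈ Finset.range n, A k) + ∑ k ∈ Finset.range n, ∑ j ∈ Finset.range k, μ (A j ∩ A k)) + μ (A n) := by
          gcongr
      _ = (μ (⋃ k ∈ Finset.range n, A k) + μ (A n)) + ∑ k ∈ Finset.range n, ∑ j ∈ Finset.range k, μ (A j ∩ A k) := by ring
      _ = (μ ((⋃ k ∈ Finset.range n, A k) ∪ A n) + μ ((⋃ k ∈ Finset.range n, A k) ∩ A n)) + ∑ k ∈ Finset.range n, ∑ j ∈ Finset.range k, μ (A j ∩ A k) := by rw [h1]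
      _ ≤ μ (⋃ k ∈ Finset.range (n+1), A k) + (∑ k ∈ Finset.range n, ∑ j ∈ Finset.range k, μ (A j ∩ A k) + ∑ j ∈ Finset.range n, μ (A j ∩ A n)) := by
          rw [h3, add_assoc, add_comm (μ ((⋃ k ∈ Finset.range n, A k) ∩ A n))]
          gcongr
      _ = _ := by ring


lemma nat_cast_eq_tsum (n : ℕ) : (n : ℝ≥0∞) = ∑' k : ℕ, (if k < n then (1:ℝ≥0∞) else 0) := by
  rw [tsum_eq_sum (s := Finset.range n) (by intro k hk; simp [Finset.mem_range] at hk; simp [hk])]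
  rw [Finset.sum_ite_of_true (by intro k hk; simpa using hk)]
  simp

lemma lintegral_nat_tail {Ω : Type*} [MeasurableSpace Ω] (μ : Measure Ω) (σ : Ω → ℕ)
    (hm : Measurable σ) :
    ∫⁻ ω, ENNReal.ofReal (σ ω : ℝ) ∂μ = ∑' k : ℕ, μ {ω | k < σ ω} := by
  have h1 : ∀ ω, ENNReal.ofReal (σ ω : ℝ) = ∑' k : ℕ, ({ω | k < σ ω}).indicator (fun _ => (1:ℝ≥0∞)) ω := by
    intro ω
    rw [ENNReal.ofReal_natCast, nat_cast_eq_tsum]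
    congr 1; ext k; simp [Set.indicator_apply, Set.mem_setOf_eq]
  simp_rw [h1]
  have hms : ∀ k : ℕ, MeasurableSet {ω | k < σ ω} := by
    intro k
    have : {ω | k < σ ω} = σ ⁻¹' (Set.Ioi k) := rfl
    rw [this]; exact hm measurableSet_Ioi
  rw [lintegral_tsum (fun k => ((measurable_const).indicator (hms k)).aemeasurable)]
  congr 1; ext k
  exact lintegral_indicator_one (hms k)


lemma sigma_tail_tendsto_zero {Ω : Type*} [MeasurableSpace Ω] (μ : Measure Ω) (σ : Ω → ℕ)
    (hT : ∑' k : ℕ, μ {ω | k < σ ω} ≠ ⊤) :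
    Tendsto (fun x : ℝ => ENNReal.ofReal x * μ {ω | x < (σ ω : ℝ)}) atTop (nhds 0) := by
  have htail : Tendsto (fun i : ℕ => ∑' k : ℕ, μ {ω | (k + i) < σ ω}) atTop (nhds 0) :=
    ENNReal.tendsto_sum_nat_add (fun k => μ {ω | k < σ ω}) hT
  have hcomp : Tendsto (fun x : ℝ => ⌊x / 2⌋₊) atTop atTop :=
    tendsto_nat_floor_atTop.comp (Tendsto.atTop_div_const (by norm_num) tendsto_id)
  have hg : Tendsto (fun x : ℝ => 2 * ∑' k : ℕ, μ {ω | (k + ⌊x / 2⌋₊) < σ ω}) atTop (nhds 0) := by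
    have h0 : Tendsto (fun x : ℝ => (2:ℝ≥0∞) * ∑' k : ℕ, μ {ω | (k + ⌊x / 2⌋₊) < σ ω})
        atTop (nhds (2 * 0)) :=
      ENNReal.Tendsto.const_mul (htail.comp hcomp) (Or.inr (by norm_num))
    simpa using h0
  refine tendsto_of_tendsto_of_tendsto_of_le_of_le' tendsto_const_nhds hg
    (Eventually.of_forall fun x => zero_le) ?_
  filter_upwards [eventually_ge_atTop (0 : ℝ)] with x hx
  set n := ⌊x⌋₊ with hn
  set h := ⌊x / 2⌋₊ with hh
  have hhn : h ≤ n := Nat.floor_mono (by linarith)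
  have h2h : 2 * h ≤ n + 1 := by
    have h1 : (h : ℝ) ≤ x / 2 := Nat.floor_le (by linarith)
    have h2 : x < (n : ℝ) + 1 := Nat.lt_floor_add_one x
    have h3 : (2 * h : ℝ) < (n : ℝ) + 1 := by linarith
    have h4 : 2 * h < n + 1 := by exact_mod_cast h3
    omega
  have hsub : {ω | x < (σ ω : ℝ)} ⊆ {ω | n < σ ω} := by
    intro ω hω
    have : (n : ℝ) < (σ ω : ℝ) := lt_of_le_of_lt (Nat.floor_le hx) hω
    exact_mod_cast this
  calc ENNReal.ofReal x * μ {ω | x < (σ ω : ℝ)}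
      ≤ ((n + 1 : ℕ) : ℝ≥0∞) * μ {ω | n < σ ω} := by
        refine mul_le_mul ?_ (measure_mono hsub) (zero_le) (zero_le)
        rw [← ENNReal.ofReal_natCast]
        exact ENNReal.ofReal_le_ofReal (by push_cast; exact (Nat.lt_floor_add_one x).le)
    _ ≤ ((2 * (n + 1 - h) : ℕ) : ℝ≥0∞) * μ {ω | n < σ ω} := by
        gcongr; exact_mod_cast by omega
    _ = 2 * ((n + 1 - h : ℕ) • μ {ω | n < σ ω}) := by
        push_cast; rw [nsmul_eq_mul]; push_cast; ring
    _ ≤ 2 * ∑ k ∈ Finset.Icc h n, μ {ω | k < σ ω} := by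
        gcongr
        have hcard : (Finset.Icc h n).card = n + 1 - h := Nat.card_Icc h n
        rw [← hcard]
        refine Finset.card_nsmul_le_sum _ _ _ ?_
        intro k hk
        simp only [Finset.mem_Icc] at hk
        exact measure_mono (fun ω hω => lt_of_le_of_lt (by exact_mod_cast hk.2) hω)
    _ ≤ 2 * ∑' k : ℕ, μ {ω | (k + h) < σ ω} := by
        gcongr
        have himg : Finset.Icc h n = (Finset.range (n + 1 - h)).image (fun k => k + h) := by
          ext k; simp [Finset.mem_Icc, Finset.mem_image, Finset.mem_range]
          constructor
          · rintro ⟨h1, h2⟩; exact ⟨k - h, by omega, by omega⟩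
          · rintro ⟨a, ha, rfl⟩; omega
        rw [himg, Finset.sum_image (by intro a _ b _ hab; simp only at hab; omega)]
        exact ENNReal.sum_le_tsum _


lemma indep_natural_future {Ω : Type*} [MeasureSpace Ω] [IsProbabilityMeasure (ℙ : Measure Ω)]
    (Q : ℕ → Ω → ℝ) (hQsm : ∀ n, StronglyMeasurable (Q n))
    (hindep : iIndepFun Q ℙ) {j k : ℕ} (hjk : j < k)
    {B : Set Ω} (hB : MeasurableSet[Filtration.natural Q hQsm j] B) (y : ℝ) :
    ℙ (B ∩ {ω | y < Q k ω}) = ℙ B * ℙ {ω | y < Q k ω} := by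
  have h_le : ∀ i, MeasurableSpace.comap (Q i) inferInstance ≤ (inferInstance : MeasurableSpace Ω) :=
    fun i => (hQsm i).measurable.comap_le
  have hI : Indep (⨆ i ∈ Set.Iic j, MeasurableSpace.comap (Q i) inferInstance)
      (⨆ i ∈ ({k} : Set ℕ), MeasurableSpace.comap (Q i) inferInstance) ℙ :=
    indep_iSup_of_disjoint h_le hindep.iIndep
      (by simp [Set.disjoint_singleton_right, Set.mem_Iic]; omega)
  rw [iSup_singleton] at hI
  have hnat : (Filtration.natural Q hQsm j : MeasurableSpace Ω) =
      ⨆ i ∈ Set.Iic j, MeasurableSpace.comap (Q i) inferInstance := rfl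
  have hBmem : MeasurableSet[⨆ i ∈ Set.Iic j, MeasurableSpace.comap (Q i) inferInstance] B := by
    rw [← hnat]; exact hB
  have hSmem : MeasurableSet[MeasurableSpace.comap (Q k) inferInstance] {ω | y < Q k ω} :=
    ⟨Set.Ioi y, measurableSet_Ioi, rfl⟩
  exact (hI.indepSet_of_measurableSet hBmem hSmem).measure_inter_eq_mul


set_option maxHeartbeats 1000000 in
theorem stmt_13 {Ω : Type*} [MeasureSpace Ω] [IsProbabilityMeasure (ℙ : Measure Ω)]
    (γ : ℝ) (hγ : γ ∈ Set.Ioo (0 : ℝ) 1)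
    (Q : ℕ → Ω → ℝ) (hQsm : ∀ n, StronglyMeasurable (Q n)) (hQ0 : ∀ n ω, 0 ≤ Q n ω)
    (hindep : iIndepFun Q ℙ)
    (hident : ∀ n, IdentDistrib (Q n) (Q 1) ℙ ℙ)
    (σ : Ω → ℕ) (hσ : IsStoppingTime (Filtration.natural Q hQsm) (fun ω => (σ ω : WithTop ℕ)))
    (hσ1 : ∀ ω, 1 ≤ σ ω) (hσint : Integrable (fun ω => (σ ω : ℝ)))
    (Qγ : Ω → ℝ) (hQγ : ∀ ω, Qγ ω = ∑ k ∈ Finset.Icc 1 (σ ω), γ ^ (σ ω - k) * Q k ω)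
    (s : ℝ≥0∞)
    (htail : Tendsto (fun t : ℝ => ENNReal.ofReal t * ℙ {ω | t < Real.log (Q 1 ω)})
      atTop (nhds s)) :
    Tendsto (fun t : ℝ => ENNReal.ofReal t * ℙ {ω | t < Real.log (Qγ ω)})
      atTop (nhds (s * ENNReal.ofReal (∫ ω, (σ ω : ℝ)))) := by
  replace hσ : ∀ n, MeasurableSet[Filtration.natural Q hQsm n] {ω | σ ω ≤ n} :=
    fun n => by simpa using hσ n
  obtain ⟨hγ0, hγ1⟩ := hγ
  set c : ℝ := Real.log γ⁻¹ with hc_def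
  have hc : 0 < c := Real.log_pos (one_lt_inv₀ hγ0 |>.mpr hγ1)
  have hγe : ∀ (N : ℕ) (t : ℝ), γ ^ N * Real.exp (t + N*c) = Real.exp t := by
    intro N t
    have hγl : γ = Real.exp (Real.log γ) := (Real.exp_log hγ0).symm
    have hcneg : c = - Real.log γ := by rw [hc_def, Real.log_inv]
    conv_lhs => rw [hγl]
    rw [← Real.exp_nat_mul, ← Real.exp_add]
    congr 1
    rw [hcneg]; ring
  -- basic positivity
  have hQγ0 : ∀ ω, 0 ≤ Qγ ω := by
    intro ω; rw [hQγ ω]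
    exact Finset.sum_nonneg fun k _ => mul_nonneg (pow_nonneg hγ0.le _) (hQ0 k ω)
  -- log-set vs exp-set
  have hlogset : ∀ (f : Ω → ℝ), (∀ ω, 0 ≤ f ω) → ∀ t : ℝ, 0 < t →
      {ω | t < Real.log (f ω)} = {ω | Real.exp t < f ω} := by
    intro f hf t ht
    ext ω
    rcases eq_or_lt_of_le (hf ω) with h | h
    · simp only [Set.mem_setOf_eq, ← h, Real.log_zero]
      constructor
      · intro h'; linarith
      · intro h'; exact absurd h' (not_lt.mpr (by linarith [Real.exp_pos t, h.symm ▸ le_refl (0:ℝ)]))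
    · simp only [Set.mem_setOf_eq]
      exact ⟨fun h' => (Real.lt_log_iff_exp_lt h).mp h', fun h' => (Real.lt_log_iff_exp_lt h).mpr h'⟩
  -- identical distribution of tails
  have hid : ∀ (k : ℕ) (y : ℝ), ℙ {ω | y < Q k ω} = ℙ {ω | y < Q 1 ω} := by
    intro k y
    have := (hident k).measure_mem_eq (s := Set.Ioi y) measurableSet_Ioi
    simpa [Set.preimage, Set.mem_Ioi] using this
  -- measurability of σ
  have hσle : ∀ n : ℕ, MeasurableSet {ω | σ ω ≤ n} :=
    fun n => (Filtration.natural Q hQsm).le n _ (hσ n)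
  have hσm : Measurable σ := by
    apply measurable_to_countable'
    intro n
    match n with
    | 0 =>
      have : σ ⁻¹' {0} = {ω | σ ω ≤ 0} := by ext ω; simp
      rw [this]; exact hσle 0
    | (m+1) =>
      have : σ ⁻¹' {m+1} = {ω | σ ω ≤ m+1} \ {ω | σ ω ≤ m} := by
        ext ω; simp [Set.mem_preimage, Set.mem_diff]; omega
      rw [this]; exact (hσle (m+1)).diff (hσle m)
  have hσgt : ∀ k : ℕ, MeasurableSet {ω | k < σ ω} := fun k => by
    have : {ω | k < σ ω} = {ω | σ ω ≤ k}ᶜ := by ext ω; simp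
    rw [this]; exact (hσle k).compl
  -- T and its properties
  set T : ℝ≥0∞ := ∑' k : ℕ, ℙ {ω | k < σ ω} with hT_def
  have hIT : ENNReal.ofReal (∫ ω, (σ ω : ℝ)) = T := by
    rw [ofReal_integral_eq_lintegral_ofReal hσint (ae_of_all _ fun ω => Nat.cast_nonneg _)]
    exact lintegral_nat_tail ℙ σ hσm
  have hTtop : T ≠ ⊤ := by rw [← hIT]; exact ENNReal.ofReal_ne_top
  have hT1 : 1 ≤ T := by
    have h0 : ℙ {ω | 0 < σ ω} = 1 := by
      have : {ω | 0 < σ ω} = Set.univ := Set.eq_univ_of_forall fun ω => hσ1 ω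
      rw [this, measure_univ]
    calc (1 : ℝ≥0∞) = ℙ {ω | 0 < σ ω} := h0.symm
      _ ≤ T := ENNReal.le_tsum 0
  have hS : Tendsto (fun N => ∑ k ∈ Finset.range N, ℙ {ω | k < σ ω}) atTop (nhds T) :=
    ENNReal.tendsto_nat_tsum _
  -- tail of σ
  have htails : Tendsto (fun x : ℝ => ENNReal.ofReal x * ℙ {ω | x < (σ ω : ℝ)})
      atTop (nhds 0) := sigma_tail_tendsto_zero ℙ σ hTtop
  -- Wald-type identity
  have hwald : ∀ (y : ℝ) (k : ℕ), 1 ≤ k →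
      ℙ ({ω | k ≤ σ ω} ∩ {ω | y < Q k ω}) = ℙ {ω | k ≤ σ ω} * ℙ {ω | y < Q 1 ω} := by
    intro y k hk
    have hset : {ω | k ≤ σ ω} = {ω | σ ω ≤ k - 1}ᶜ := by
      ext ω; simp; omega
    have hB : MeasurableSet[Filtration.natural Q hQsm (k-1)] {ω | k ≤ σ ω} := by
      rw [hset]; exact (hσ (k-1)).compl
    have := indep_natural_future Q hQsm hindep (j := k-1) (k := k) (by omega) hB y
    rw [this, hid k y]
  -- cross bound
  have hcross : ∀ (y : ℝ) (j k : ℕ), 1 ≤ j → j < k →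
      ℙ (({ω | j ≤ σ ω} ∩ {ω | y < Q j ω}) ∩ ({ω | k ≤ σ ω} ∩ {ω | y < Q k ω})) ≤
        ℙ {ω | j ≤ σ ω} * ℙ {ω | y < Q 1 ω} * ℙ {ω | y < Q 1 ω} := by
    intro y j k hj hjk
    set B : Set Ω := ({ω | j ≤ σ ω} ∩ {ω | y < Q j ω}) ∩ {ω | k ≤ σ ω} with hB_def
    have hBmeas : MeasurableSet[Filtration.natural Q hQsm (k-1)] B := by
      have h1 : MeasurableSet[Filtration.natural Q hQsm (k-1)] {ω | j ≤ σ ω} := by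
        have hset : {ω | j ≤ σ ω} = {ω | σ ω ≤ j - 1}ᶜ := by ext ω; simp; omega
        rw [hset]
        exact ((Filtration.natural Q hQsm).mono (by omega : j - 1 ≤ k - 1) _ (hσ (j-1))).compl
      have h2 : MeasurableSet[Filtration.natural Q hQsm (k-1)] {ω | y < Q j ω} := by
        have hle : MeasurableSpace.comap (Q j) inferInstance ≤
            (Filtration.natural Q hQsm (k-1) : MeasurableSpace Ω) :=
          le_biSup (fun i => MeasurableSpace.comap (Q i) inferInstance) (by omega : j ≤ k - 1)
        exact hle _ ⟨Set.Ioi y, measurableSet_Ioi, rfl⟩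
      have h3 : MeasurableSet[Filtration.natural Q hQsm (k-1)] {ω | k ≤ σ ω} := by
        have hset : {ω | k ≤ σ ω} = {ω | σ ω ≤ k - 1}ᶜ := by ext ω; simp; omega
        rw [hset]; exact (hσ (k-1)).compl
      exact (h1.inter h2).inter h3
    have heq : ({ω | j ≤ σ ω} ∩ {ω | y < Q j ω}) ∩ ({ω | k ≤ σ ω} ∩ {ω | y < Q k ω}) =
        B ∩ {ω | y < Q k ω} := by rw [hB_def]; ac_rfl
    rw [heq, indep_natural_future Q hQsm hindep (j := k-1) (k := k) (by omega) hBmeas y, hid k y]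
    have hBle : ℙ B ≤ ℙ {ω | j ≤ σ ω} * ℙ {ω | y < Q 1 ω} := by
      rw [← hwald y j hj]
      exact measure_mono Set.inter_subset_left
    exact mul_le_mul_left hBle _
  -- G notation
  have hGexp : ∀ u : ℝ, 0 < u →
      ℙ {ω | u < Real.log (Q 1 ω)} = ℙ {ω | Real.exp u < Q 1 ω} := by
    intro u hu; rw [hlogset (Q 1) (hQ0 1) u hu]
  -- upper measure estimate
  have hup_meas : ∀ ε : ℝ, 0 < ε → ε < 1 → ∀ t : ℝ, 0 < t →
      ℙ {ω | t < Real.log (Qγ ω)} ≤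
        ℙ {ω | Real.exp (ε*t) < (σ ω : ℝ)} + T * ℙ {ω | Real.exp ((1-ε)*t) < Q 1 ω} := by
    intro ε hε hε1 t ht
    have hincl : {ω | t < Real.log (Qγ ω)} ⊆
        {ω | Real.exp (ε*t) < (σ ω : ℝ)} ∪
          ⋃ j : ℕ, ({ω | j < σ ω} ∩ {ω | Real.exp ((1-ε)*t) < Q (j+1) ω}) := by
      rw [hlogset Qγ hQγ0 t ht]
      intro ω hω
      simp only [Set.mem_setOf_eq] at hω
      by_cases hσε : Real.exp (ε*t) < (σ ω : ℝ)
      · exact Or.inl hσε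
      · push_neg at hσε
        right
        by_contra hcon
        simp only [Set.mem_iUnion, Set.mem_inter_iff, Set.mem_setOf_eq, not_exists, not_and] at hcon
        have hbound : ∀ k ∈ Finset.Icc 1 (σ ω), γ ^ (σ ω - k) * Q k ω ≤ Real.exp ((1-ε)*t) := by
          intro k hk
          simp only [Finset.mem_Icc] at hk
          have h1 : γ ^ (σ ω - k) * Q k ω ≤ Q k ω := by
            have hp := pow_le_one₀ hγ0.le hγ1.le (n := σ ω - k)
            nlinarith [hQ0 k ω, pow_nonneg hγ0.le (σ ω - k)]
          have h2' := hcon (k-1)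
          have hk1 : k - 1 + 1 = k := by omega
          rw [hk1] at h2'
          have h2 : Q k ω ≤ Real.exp ((1-ε)*t) := not_lt.mp (h2' (by omega))
          linarith
        have hsum : Qγ ω ≤ (σ ω : ℝ) * Real.exp ((1-ε)*t) := by
          rw [hQγ ω]
          calc ∑ k ∈ Finset.Icc 1 (σ ω), γ ^ (σ ω - k) * Q k ω
              ≤ (Finset.Icc 1 (σ ω)).card • Real.exp ((1-ε)*t) :=
                Finset.sum_le_card_nsmul _ _ _ hbound
            _ = (σ ω : ℝ) * Real.exp ((1-ε)*t) := by
                rw [Nat.card_Icc]; simp [nsmul_eq_mul]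
        have hfin : Qγ ω ≤ Real.exp t := by
          have h3 : (σ ω : ℝ) * Real.exp ((1-ε)*t) ≤ Real.exp (ε*t) * Real.exp ((1-ε)*t) :=
            mul_le_mul_of_nonneg_right hσε (Real.exp_pos _).le
          have h4 : Real.exp (ε*t) * Real.exp ((1-ε)*t) = Real.exp t := by
            rw [← Real.exp_add]; ring_nf
          linarith
        linarith
    calc ℙ {ω | t < Real.log (Qγ ω)}
        ≤ ℙ ({ω | Real.exp (ε*t) < (σ ω : ℝ)} ∪
            ⋃ j : ℕ, ({ω | j < σ ω} ∩ {ω | Real.exp ((1-ε)*t) < Q (j+1) ω})) :=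
          measure_mono hincl
      _ ≤ ℙ {ω | Real.exp (ε*t) < (σ ω : ℝ)} +
            ℙ (⋃ j : ℕ, ({ω | j < σ ω} ∩ {ω | Real.exp ((1-ε)*t) < Q (j+1) ω})) :=
          measure_union_le _ _
      _ ≤ ℙ {ω | Real.exp (ε*t) < (σ ω : ℝ)} +
            ∑' j : ℕ, ℙ ({ω | j < σ ω} ∩ {ω | Real.exp ((1-ε)*t) < Q (j+1) ω}) := by
          gcongr
          exact measure_iUnion_le _
      _ = ℙ {ω | Real.exp (ε*t) < (σ ω : ℝ)} +
            ∑' j : ℕ, ℙ {ω | j < σ ω} * ℙ {ω | Real.exp ((1-ε)*t) < Q 1 ω} := by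
          congr 1
          exact tsum_congr fun j => hwald _ (j+1) (by omega)
      _ = ℙ {ω | Real.exp (ε*t) < (σ ω : ℝ)} + T * ℙ {ω | Real.exp ((1-ε)*t) < Q 1 ω} := by
          rw [ENNReal.tsum_mul_right]
  -- lower (Bonferroni) measure estimate
  have hlow_meas : ∀ t : ℝ, 0 < t → ∀ N : ℕ,
      (∑ j ∈ Finset.range N, ℙ {ω | j < σ ω}) * ℙ {ω | Real.exp (t + N*c) < Q 1 ω} ≤
        ℙ {ω | t < Real.log (Qγ ω)} + ℙ {ω | N < σ ω} +
          (N : ℝ≥0∞) * T *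
            (ℙ {ω | Real.exp (t + N*c) < Q 1 ω} * ℙ {ω | Real.exp (t + N*c) < Q 1 ω}) := by
    intro t ht N
    set x : ℝ := Real.exp (t + N*c) with hx_def
    set p : ℝ≥0∞ := ℙ {ω | x < Q 1 ω} with hp_def
    set A : ℕ → Set Ω := fun j => {ω | j < σ ω} ∩ {ω | x < Q (j+1) ω} with hA_def
    have hAmeas : ∀ j, MeasurableSet (A j) := by
      intro j
      refine (hσgt j).inter ?_
      have : {ω | x < Q (j+1) ω} = (Q (j+1)) ⁻¹' (Set.Ioi x) := rfl
      rw [this]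
      exact (hQsm (j+1)).measurable measurableSet_Ioi
    have hPA : ∀ j, ℙ (A j) = ℙ {ω | j < σ ω} * p :=
      fun j => hwald x (j+1) (by omega)
    have hγx : γ ^ N * x = Real.exp t := hγe N t
    have hU : ℙ (⋃ j ∈ Finset.range N, A j) ≤
        ℙ {ω | t < Real.log (Qγ ω)} + ℙ {ω | N < σ ω} := by
      refine (measure_mono ?_).trans (measure_union_le _ _)
      intro ω hω
      simp only [Set.mem_iUnion, Finset.mem_range, exists_prop, hA_def,
        Set.mem_inter_iff, Set.mem_setOf_eq] at hω
      obtain ⟨j, hjN, hjσ, hQx⟩ := hω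
      by_cases hσN : N < σ ω
      · exact Or.inr hσN
      · push_neg at hσN
        left
        have hmem : (j+1) ∈ Finset.Icc 1 (σ ω) := by simp [Finset.mem_Icc]; omega
        have hterm : γ ^ (σ ω - (j+1)) * Q (j+1) ω ≤ Qγ ω := by
          rw [hQγ ω]
          exact Finset.single_le_sum
            (fun k _ => mul_nonneg (pow_nonneg hγ0.le _) (hQ0 k ω)) hmem
        have hpow : γ ^ N ≤ γ ^ (σ ω - (j+1)) :=
          pow_le_pow_of_le_one hγ0.le hγ1.le (by omega)
        have hgt : Real.exp t < Qγ ω := by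
          have h1 : γ ^ N * x < γ ^ N * Q (j+1) ω :=
            mul_lt_mul_of_pos_left hQx (pow_pos hγ0 N)
          have h2 : γ ^ N * Q (j+1) ω ≤ γ ^ (σ ω - (j+1)) * Q (j+1) ω :=
            mul_le_mul_of_nonneg_right hpow (hQ0 _ ω)
          rw [hγx] at h1
          linarith
        have hmemset : ω ∈ {ω | Real.exp t < Qγ ω} := hgt
        rw [hlogset Qγ hQγ0 t ht]
        exact hmemset
    have hC : ∑ k ∈ Finset.range N, ∑ j ∈ Finset.range k, ℙ (A j ∩ A k) ≤
        (N : ℝ≥0∞) * T * (p * p) := by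
      have hinner : ∀ k, ∑ j ∈ Finset.range k, ℙ (A j ∩ A k) ≤ T * (p * p) := by
        intro k
        calc ∑ j ∈ Finset.range k, ℙ (A j ∩ A k)
            ≤ ∑ j ∈ Finset.range k, ℙ {ω | j < σ ω} * (p * p) := by
              refine Finset.sum_le_sum fun j hj => ?_
              simp only [Finset.mem_range] at hj
              have hjk : ℙ (A j ∩ A k) ≤ ℙ {ω | j < σ ω} * ℙ {ω | x < Q 1 ω} * ℙ {ω | x < Q 1 ω} :=
                hcross x (j+1) (k+1) (by omega) (by omega)
              calc ℙ (A j ∩ A k) ≤ ℙ {ω | j < σ ω} * ℙ {ω | x < Q 1 ω} * ℙ {ω | x < Q 1 ω} := hjk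
                _ = ℙ {ω | j < σ ω} * (p * p) := by rw [hp_def, mul_assoc]
          _ = (∑ j ∈ Finset.range k, ℙ {ω | j < σ ω}) * (p * p) := by
              rw [Finset.sum_mul]
          _ ≤ T * (p * p) := by
              gcongr
              exact ENNReal.sum_le_tsum _
      calc ∑ k ∈ Finset.range N, ∑ j ∈ Finset.range k, ℙ (A j ∩ A k)
          ≤ ∑ _k ∈ Finset.range N, T * (p * p) := Finset.sum_le_sum fun k _ => hinner k
        _ = (N : ℝ≥0∞) * (T * (p * p)) := by
            rw [Finset.sum_const, Finset.card_range, nsmul_eq_mul]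
        _ = (N : ℝ≥0∞) * T * (p * p) := by ring
    calc (∑ j ∈ Finset.range N, ℙ {ω | j < σ ω}) * p
        = ∑ j ∈ Finset.range N, ℙ (A j) := by
          rw [Finset.sum_mul]; exact Finset.sum_congr rfl fun j _ => (hPA j).symm
      _ ≤ ℙ (⋃ j ∈ Finset.range N, A j) +
            ∑ k ∈ Finset.range N, ∑ j ∈ Finset.range k, ℙ (A j ∩ A k) :=
          bonferroni ℙ A hAmeas N
      _ ≤ (ℙ {ω | t < Real.log (Qγ ω)} + ℙ {ω | N < σ ω}) + (N : ℝ≥0∞) * T * (p * p) := by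
          gcongr
      _ = _ := by rw [add_assoc]
  rw [hIT]
  rcases eq_or_ne s ⊤ with hstop | hsfin
  · -- case s = ⊤
    rw [hstop, ENNReal.top_mul (by intro h0; rw [h0] at hT1; exact absurd hT1 (by simp))]
    rw [ENNReal.tendsto_nhds_top_iff_nnreal]
    intro x
    set N : ℝ → ℕ := fun t => ⌈t⌉₊ + 1 with hN_def
    set u : ℝ → ℝ := fun t => t + (N t) * c with hu_def
    have hut : ∀ t, 0 < t → t ≤ u t := by
      intro t ht
      have : (0:ℝ) ≤ (N t) * c := mul_nonneg (Nat.cast_nonneg _) hc.le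
      simp only [hu_def]; linarith
    have hkey : ∀ t : ℝ, 0 < t → ℙ {ω | Real.exp (u t) < Q 1 ω} ≤
        ℙ {ω | t < Real.log (Qγ ω)} + ℙ {ω | N t < σ ω} := by
      intro t ht
      refine (measure_mono ?_).trans (measure_union_le _ _)
      intro ω hω
      simp only [Set.mem_setOf_eq] at hω
      by_cases hσN : N t < σ ω
      · exact Or.inr hσN
      · push_neg at hσN
        left
        have hmem : 1 ∈ Finset.Icc 1 (σ ω) := by simp [hσ1 ω]
        have hterm : γ ^ (σ ω - 1) * Q 1 ω ≤ Qγ ω := by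
          rw [hQγ ω]
          exact Finset.single_le_sum
            (fun k _ => mul_nonneg (pow_nonneg hγ0.le _) (hQ0 k ω)) hmem
        have hpow : γ ^ (N t) ≤ γ ^ (σ ω - 1) :=
          pow_le_pow_of_le_one hγ0.le hγ1.le (by omega)
        have hgt : Real.exp t < Qγ ω := by
          have h1 : γ ^ (N t) * Real.exp (u t) < γ ^ (N t) * Q 1 ω :=
            mul_lt_mul_of_pos_left hω (pow_pos hγ0 _)
          have h2 : γ ^ (N t) * Q 1 ω ≤ γ ^ (σ ω - 1) * Q 1 ω :=
            mul_le_mul_of_nonneg_right hpow (hQ0 _ ω)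
          have h3 : γ ^ (N t) * Real.exp (u t) = Real.exp t := hγe (N t) t
          linarith
        rw [hlogset Qγ hQγ0 t ht]
        exact hgt
    have herr : Tendsto (fun t : ℝ => ENNReal.ofReal t * ℙ {ω | N t < σ ω}) atTop (nhds 0) := by
      refine tendsto_of_tendsto_of_tendsto_of_le_of_le' tendsto_const_nhds htails
        (Eventually.of_forall fun t => zero_le) ?_
      filter_upwards [eventually_ge_atTop (0:ℝ)] with t ht
      refine mul_le_mul_right (measure_mono ?_) _
      intro ω hω
      simp only [Set.mem_setOf_eq] at hω ⊢
      have h1 : (t:ℝ) ≤ ⌈t⌉₊ := Nat.le_ceil t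
      have h2 : (N t : ℝ) < σ ω := by exact_mod_cast hω
      have : (N t : ℝ) = (⌈t⌉₊ : ℝ) + 1 := by simp [hN_def]
      linarith
    have humain : Tendsto u atTop atTop :=
      tendsto_atTop_mono
        (fun t => le_add_of_nonneg_right (mul_nonneg (Nat.cast_nonneg _) hc.le)) tendsto_id
    have hmain : Tendsto (fun t => ENNReal.ofReal (u t) * ℙ {ω | u t < Real.log (Q 1 ω)})
        atTop (nhds ⊤) := by
      have := htail.comp humain
      rw [hstop] at this
      exact this
    have hev3 := (hmain.eventually_const_lt
      (show ENNReal.ofReal ((1+2*c)*((x:ℝ)+2)) < ⊤ from ENNReal.ofReal_lt_top)).mono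
      (fun t h => h.le)
    filter_upwards [eventually_gt_atTop (0:ℝ), eventually_ge_atTop (2:ℝ),
      herr.eventually_le_const (by norm_num : (0:ℝ≥0∞) < 1), hev3] with t ht ht2 herr1 hbig
    -- u t ≤ (1+2c) t
    have huup : u t ≤ (1+2*c)*t := by
      have h1 : (⌈t⌉₊ : ℝ) < t + 1 := Nat.ceil_lt_add_one (by linarith)
      have h2 : (N t : ℝ) = (⌈t⌉₊ : ℝ) + 1 := by simp [hN_def]
      have h3 : (N t : ℝ) * c ≤ (t + 2) * c := by nlinarith
      have h4 : (t + 2) * c ≤ 2 * t * c := by nlinarith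
      simp only [hu_def]; nlinarith
    have hinv : ENNReal.ofReal ((1+2*c)⁻¹) * ENNReal.ofReal (u t) ≤ ENNReal.ofReal t := by
      rw [← ENNReal.ofReal_mul (by positivity)]
      refine ENNReal.ofReal_le_ofReal ?_
      rw [inv_mul_le_iff₀ (by positivity)]
      linarith
    have hlow : ENNReal.ofReal ((1+2*c)⁻¹) * (ENNReal.ofReal (u t) * ℙ {ω | u t < Real.log (Q 1 ω)}) ≤
        ENNReal.ofReal t * ℙ {ω | t < Real.log (Qγ ω)} + 1 := by
      calc ENNReal.ofReal ((1+2*c)⁻¹) * (ENNReal.ofReal (u t) * ℙ {ω | u t < Real.log (Q 1 ω)})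
          = (ENNReal.ofReal ((1+2*c)⁻¹) * ENNReal.ofReal (u t)) * ℙ {ω | u t < Real.log (Q 1 ω)} := by ring
        _ ≤ ENNReal.ofReal t * ℙ {ω | u t < Real.log (Q 1 ω)} := mul_le_mul_left hinv _
        _ = ENNReal.ofReal t * ℙ {ω | Real.exp (u t) < Q 1 ω} := by
            rw [hGexp (u t) (lt_of_lt_of_le ht (hut t ht))]
        _ ≤ ENNReal.ofReal t * (ℙ {ω | t < Real.log (Qγ ω)} + ℙ {ω | N t < σ ω}) :=
            mul_le_mul_right (hkey t ht) _
        _ = ENNReal.ofReal t * ℙ {ω | t < Real.log (Qγ ω)} + ENNReal.ofReal t * ℙ {ω | N t < σ ω} := by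
            ring
        _ ≤ ENNReal.ofReal t * ℙ {ω | t < Real.log (Qγ ω)} + 1 := add_le_add_right herr1 _
    have hx2 : (x : ℝ≥0∞) + 2 ≤ ENNReal.ofReal t * ℙ {ω | t < Real.log (Qγ ω)} + 1 := by
      refine le_trans ?_ hlow
      calc (x : ℝ≥0∞) + 2 = ENNReal.ofReal ((x:ℝ) + 2) := by
            rw [ENNReal.ofReal_add (by positivity) (by norm_num)]
            simp [ENNReal.ofReal_coe_nnreal]
        _ = ENNReal.ofReal ((1+2*c)⁻¹ * ((1+2*c)*((x:ℝ)+2))) := by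
            congr 1
            field_simp
        _ = ENNReal.ofReal ((1+2*c)⁻¹) * ENNReal.ofReal ((1+2*c)*((x:ℝ)+2)) :=
            ENNReal.ofReal_mul (by positivity)
        _ ≤ _ := mul_le_mul_right hbig _
    -- conclude x < f t
    have : (x : ℝ≥0∞) + 1 ≤ ENNReal.ofReal t * ℙ {ω | t < Real.log (Qγ ω)} := by
      by_contra hcon
      push_neg at hcon
      have h5 : ENNReal.ofReal t * ℙ {ω | t < Real.log (Qγ ω)} + 1 < ((x:ℝ≥0∞) + 1) + 1 :=
        ENNReal.add_lt_add_right (by norm_num) hcon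
      have h6 : ((x:ℝ≥0∞) + 1) + 1 = (x:ℝ≥0∞) + 2 := by rw [add_assoc]; norm_num
      rw [h6] at h5
      exact absurd hx2 (not_le.mpr h5)
    calc (x : ℝ≥0∞) < x + 1 := ENNReal.lt_add_right (by simp) (by norm_num)
      _ ≤ _ := this
  · -- case s ≠ ⊤
    set f : ℝ → ℝ≥0∞ := fun t => ENNReal.ofReal t * ℙ {ω | t < Real.log (Qγ ω)} with hf_def
    set D : ℝ≥0∞ := 2 * T * (s * s) + (ENNReal.ofReal (2*c) + 2) * (s * T) with hD_def
    have hsT_fin : s * T ≠ ⊤ := ENNReal.mul_ne_top hsfin hTtop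
    have hD_fin : D ≠ ⊤ := by
      rw [hD_def]
      refine ENNReal.add_ne_top.mpr ⟨?_, ?_⟩
      · exact ENNReal.mul_ne_top (ENNReal.mul_ne_top (by norm_num) hTtop)
          (ENNReal.mul_ne_top hsfin hsfin)
      · exact ENNReal.mul_ne_top
          (ENNReal.add_ne_top.mpr ⟨ENNReal.ofReal_ne_top, by norm_num⟩) hsT_fin
    -- limsup bound
    have hsup : ∀ ε : ℝ, 0 < ε → ε ≤ 1/2 → limsup f atTop ≤ s * T + ENNReal.ofReal ε * D := by
      intro ε hε hε2
      have h1ε : 0 < 1 - ε := by linarith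
      -- term A tendsto 0
      have hA : Tendsto (fun t : ℝ => ENNReal.ofReal t * ℙ {ω | Real.exp (ε*t) < (σ ω : ℝ)})
          atTop (nhds 0) := by
        have hcompexp : Tendsto (fun t : ℝ => Real.exp (ε*t)) atTop atTop :=
          Real.tendsto_exp_atTop.comp (Tendsto.const_mul_atTop hε tendsto_id)
        refine tendsto_of_tendsto_of_tendsto_of_le_of_le' tendsto_const_nhds
          (htails.comp hcompexp) (Eventually.of_forall fun t => zero_le) ?_
        filter_upwards [eventually_ge_atTop (max 0 (4/ε^2))] with t ht
        obtain ⟨ht0, ht4⟩ := max_le_iff.mp ht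
        have he : t ≤ Real.exp (ε*t) := by
          have h1 : ε*t/2 + 1 ≤ Real.exp (ε*t/2) := Real.add_one_le_exp _
          have h2 : Real.exp (ε*t) = Real.exp (ε*t/2) * Real.exp (ε*t/2) := by
            rw [← Real.exp_add]; ring_nf
          have htε : (0:ℝ) ≤ ε*t := mul_nonneg hε.le ht0
          have h3 : (ε*t/2 + 1) * (ε*t/2 + 1) ≤ Real.exp (ε*t/2) * Real.exp (ε*t/2) :=
            mul_le_mul h1 h1 (by linarith) (Real.exp_pos _).le
          have hε2 : (0:ℝ) < ε^2 := by positivity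
          have h6 : 4 ≤ ε^2 * t := by
            rw [div_le_iff₀ hε2] at ht4; linarith
          have h7 : t * 4 ≤ t * (ε^2 * t) := mul_le_mul_of_nonneg_left h6 ht0
          nlinarith [h2, h3, h7, htε]
        exact mul_le_mul' (ENNReal.ofReal_le_ofReal he) le_rfl
      -- term B tendsto
      have hB : Tendsto (fun t : ℝ =>
          ENNReal.ofReal ((1-ε)*t) * ℙ {ω | (1-ε)*t < Real.log (Q 1 ω)}) atTop (nhds s) :=
        htail.comp (Tendsto.const_mul_atTop h1ε tendsto_id)
      have hBT : Tendsto (fun t : ℝ => ENNReal.ofReal (1/(1-ε)) *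
          ((ENNReal.ofReal ((1-ε)*t) * ℙ {ω | (1-ε)*t < Real.log (Q 1 ω)}) * T)) atTop
          (nhds (ENNReal.ofReal (1/(1-ε)) * (s * T))) :=
        ENNReal.Tendsto.const_mul (ENNReal.Tendsto.mul_const hB (Or.inr hTtop))
          (Or.inr ENNReal.ofReal_ne_top)
      have hg : Tendsto (fun t : ℝ =>
          ENNReal.ofReal t * ℙ {ω | Real.exp (ε*t) < (σ ω : ℝ)} +
          ENNReal.ofReal (1/(1-ε)) *
            ((ENNReal.ofReal ((1-ε)*t) * ℙ {ω | (1-ε)*t < Real.log (Q 1 ω)}) * T)) atTop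
          (nhds (0 + ENNReal.ofReal (1/(1-ε)) * (s * T))) := hA.add hBT
      have hfg : ∀ᶠ t in atTop, f t ≤
          ENNReal.ofReal t * ℙ {ω | Real.exp (ε*t) < (σ ω : ℝ)} +
          ENNReal.ofReal (1/(1-ε)) *
            ((ENNReal.ofReal ((1-ε)*t) * ℙ {ω | (1-ε)*t < Real.log (Q 1 ω)}) * T) := by
        filter_upwards [eventually_gt_atTop (0:ℝ)] with t ht
        have hsplit : ENNReal.ofReal t = ENNReal.ofReal (1/(1-ε)) * ENNReal.ofReal ((1-ε)*t) := by
          rw [← ENNReal.ofReal_mul (by positivity)]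
          congr 1
          field_simp
        calc f t ≤ ENNReal.ofReal t * (ℙ {ω | Real.exp (ε*t) < (σ ω : ℝ)} +
              T * ℙ {ω | Real.exp ((1-ε)*t) < Q 1 ω}) :=
            mul_le_mul_right (hup_meas ε hε (by linarith) t ht) _
          _ = ENNReal.ofReal t * ℙ {ω | Real.exp (ε*t) < (σ ω : ℝ)} +
              ENNReal.ofReal t * (T * ℙ {ω | Real.exp ((1-ε)*t) < Q 1 ω}) := by ring
          _ = _ := by
            congr 1
            rw [hsplit, ← hGexp ((1-ε)*t) (by positivity)]
            ring
      calc limsup f atTop ≤ 0 + ENNReal.ofReal (1/(1-ε)) * (s * T) := by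
            rw [← hg.limsup_eq]
            exact limsup_le_limsup hfg
        _ = ENNReal.ofReal (1/(1-ε)) * (s * T) := by rw [zero_add]
        _ ≤ (1 + ENNReal.ofReal (2*ε)) * (s * T) := by
            refine mul_le_mul_left ?_ _
            have h12 : 1/(1-ε) ≤ 1 + 2*ε := by
              rw [div_le_iff₀ h1ε]
              nlinarith
            calc ENNReal.ofReal (1/(1-ε)) ≤ ENNReal.ofReal (1 + 2*ε) :=
                ENNReal.ofReal_le_ofReal h12
              _ = 1 + ENNReal.ofReal (2*ε) := by
                rw [ENNReal.ofReal_add (by norm_num) (by positivity)]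
                norm_num
        _ = s * T + ENNReal.ofReal (2*ε) * (s * T) := by ring
        _ ≤ s * T + ENNReal.ofReal ε * D := by
            refine add_le_add_right ?_ _
            have h2e : ENNReal.ofReal (2*ε) = ENNReal.ofReal ε * 2 := by
              rw [mul_comm (2:ℝ) ε, ENNReal.ofReal_mul (by positivity)]
              norm_num
            rw [h2e, mul_assoc]
            refine mul_le_mul_right ?_ _
            rw [hD_def]
            calc 2 * (s * T) ≤ (ENNReal.ofReal (2*c) + 2) * (s * T) := by
                  refine mul_le_mul_left ?_ _
                  exact le_add_self
              _ ≤ _ := le_add_self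
    -- liminf bound
    have hT0 : T ≠ 0 := fun h0 => by rw [h0] at hT1; exact absurd hT1 (by simp)
    have hinf : ∀ ε : ℝ, 0 < ε → ε ≤ 1/2 → ∀ δ : ℝ≥0∞, 0 < δ → δ ≠ ⊤ →
        s * T ≤ liminf f atTop + ENNReal.ofReal ε * D + (δ + δ + δ) := by
      intro ε hε hε2 δ hδ hδtop
      set Nt : ℝ → ℕ := fun t => ⌈ε*t⌉₊ with hNt_def
      set ut : ℝ → ℝ := fun t => t + (Nt t) * c with hut_def
      have hutge : ∀ t, t ≤ ut t :=
        fun t => le_add_of_nonneg_right (mul_nonneg (Nat.cast_nonneg _) hc.le)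
      have hutat : Tendsto ut atTop atTop := tendsto_atTop_mono hutge tendsto_id
      have hNtat : Tendsto Nt atTop atTop :=
        tendsto_nat_ceil_atTop.comp (Tendsto.const_mul_atTop hε tendsto_id)
      have hXu : Tendsto (fun t => ENNReal.ofReal (ut t) * ℙ {ω | ut t < Real.log (Q 1 ω)})
          atTop (nhds s) := htail.comp hutat
      have hSN : Tendsto (fun t => ∑ j ∈ Finset.range (Nt t), ℙ {ω | j < σ ω})
          atTop (nhds T) := hS.comp hNtat
      set cst : ℝ≥0∞ := ENNReal.ofReal ((1+2*ε*c)⁻¹) with hcst_def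
      set Aε : ℝ≥0∞ := cst * s * T with hAe_def
      set Bε : ℝ≥0∞ := ENNReal.ofReal (2*ε) * T * (s * s) with hBe_def
      set K : ℝ → ℝ≥0∞ := fun t =>
        cst * (ENNReal.ofReal (ut t) * ℙ {ω | ut t < Real.log (Q 1 ω)}) *
          (∑ j ∈ Finset.range (Nt t), ℙ {ω | j < σ ω}) with hK_def
      have hK : Tendsto K atTop (nhds Aε) := by
        have h1 : Tendsto (fun t => cst * (ENNReal.ofReal (ut t) * ℙ {ω | ut t < Real.log (Q 1 ω)}))
            atTop (nhds (cst * s)) :=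
          ENNReal.Tendsto.const_mul hXu (Or.inr ENNReal.ofReal_ne_top)
        exact ENNReal.Tendsto.mul h1 (Or.inr hTtop) hSN (Or.inl hT0)
      have hAfin : Aε ≠ ⊤ :=
        ENNReal.mul_ne_top (ENNReal.mul_ne_top ENNReal.ofReal_ne_top hsfin) hTtop
      have hBfin : Bε ≠ ⊤ :=
        ENNReal.mul_ne_top (ENNReal.mul_ne_top ENNReal.ofReal_ne_top hTtop)
          (ENNReal.mul_ne_top hsfin hsfin)
      -- error 1 bound function
      have he1 : Tendsto (fun t : ℝ => ENNReal.ofReal (ε⁻¹) *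
          (ENNReal.ofReal (ε*t) * ℙ {ω | ε*t < (σ ω : ℝ)})) atTop (nhds 0) := by
        have := ENNReal.Tendsto.const_mul (htails.comp (Tendsto.const_mul_atTop hε tendsto_id))
          (Or.inr (show ENNReal.ofReal ε⁻¹ ≠ ⊤ from ENNReal.ofReal_ne_top))
        simpa using this
      -- error 2 bound function
      have hM : Tendsto (fun t : ℝ => ENNReal.ofReal (2*ε) * T *
          ((ENNReal.ofReal t * ℙ {ω | t < Real.log (Q 1 ω)}) *
           (ENNReal.ofReal t * ℙ {ω | t < Real.log (Q 1 ω)}))) atTop (nhds Bε) :=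
        ENNReal.Tendsto.const_mul (ENNReal.Tendsto.mul htail (Or.inr hsfin) htail (Or.inr hsfin))
          (Or.inr (ENNReal.mul_ne_top ENNReal.ofReal_ne_top hTtop))
      -- eventual inequalities
      have hev1 : ∀ᶠ t in atTop, Aε < K t + δ := by
        have hKδ : Tendsto (fun t => K t + δ) atTop (nhds (Aε + δ)) :=
          hK.add tendsto_const_nhds
        exact hKδ.eventually_const_lt (ENNReal.lt_add_right hAfin hδ.ne')
      have hev2 : ∀ᶠ t in atTop, ENNReal.ofReal (ε⁻¹) *
          (ENNReal.ofReal (ε*t) * ℙ {ω | ε*t < (σ ω : ℝ)}) ≤ δ :=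
        he1.eventually_le_const hδ
      have hev3 : ∀ᶠ t in atTop, ENNReal.ofReal (2*ε) * T *
          ((ENNReal.ofReal t * ℙ {ω | t < Real.log (Q 1 ω)}) *
           (ENNReal.ofReal t * ℙ {ω | t < Real.log (Q 1 ω)})) ≤ Bε + δ :=
        (hM.eventually_lt_const (ENNReal.lt_add_right hBfin hδ.ne')).mono fun t h => h.le
      -- pointwise chain
      have hmain : ∀ᶠ t in atTop, Aε ≤ f t + (Bε + δ) + δ + δ := by
        filter_upwards [hev1, hev2, hev3, eventually_gt_atTop (0:ℝ),
          eventually_ge_atTop (ε⁻¹)] with t h1 h2 h3 ht htε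
        have hεt1 : 1 ≤ ε*t := by
          have h5 : ε * ε⁻¹ ≤ ε * t := mul_le_mul_of_nonneg_left htε hε.le
          rwa [mul_inv_cancel₀ hε.ne'] at h5
        have hNl : ε*t ≤ (Nt t : ℝ) := Nat.le_ceil _
        have hNu : (Nt t : ℝ) ≤ 2*ε*t := by
          have := Nat.ceil_lt_add_one (by positivity : (0:ℝ) ≤ ε*t)
          push_cast at this ⊢
          nlinarith
        have hutpos : 0 < ut t := lt_of_lt_of_le ht (hutge t)
        have hutub : ut t ≤ (1+2*ε*c)*t := by
          have h4 : (Nt t : ℝ) * c ≤ 2*ε*t*c := mul_le_mul_of_nonneg_right hNu hc.le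
          simp only [hut_def]
          nlinarith
        -- p t and its relations
        set p : ℝ≥0∞ := ℙ {ω | Real.exp (ut t) < Q 1 ω} with hp_def
        have hpG : p = ℙ {ω | ut t < Real.log (Q 1 ω)} := (hGexp (ut t) hutpos).symm
        have hpGt : p ≤ ℙ {ω | t < Real.log (Q 1 ω)} := by
          rw [hpG]
          exact measure_mono fun ω hω => lt_of_le_of_lt (hutge t) hω
        -- main measure estimate, multiplied by ofReal t
        have hcore := hlow_meas t ht (Nt t)
        have hmult := mul_le_mul_right hcore (ENNReal.ofReal t)
        -- lower bound: K t ≤ ofReal t * (SN * p)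
        have hKle : K t ≤ ENNReal.ofReal t *
            ((∑ j ∈ Finset.range (Nt t), ℙ {ω | j < σ ω}) * p) := by
          have hsplit : cst * ENNReal.ofReal (ut t) ≤ ENNReal.ofReal t := by
            rw [hcst_def, ← ENNReal.ofReal_mul (by positivity)]
            refine ENNReal.ofReal_le_ofReal ?_
            rw [inv_mul_le_iff₀ (by positivity)]
            linarith
          calc K t = (cst * ENNReal.ofReal (ut t)) * ℙ {ω | ut t < Real.log (Q 1 ω)} *
                (∑ j ∈ Finset.range (Nt t), ℙ {ω | j < σ ω}) := by rw [hK_def]; ring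
            _ ≤ ENNReal.ofReal t * ℙ {ω | ut t < Real.log (Q 1 ω)} *
                (∑ j ∈ Finset.range (Nt t), ℙ {ω | j < σ ω}) := by
                exact mul_le_mul_left (mul_le_mul_left hsplit _) _
            _ = ENNReal.ofReal t * ((∑ j ∈ Finset.range (Nt t), ℙ {ω | j < σ ω}) * p) := by
                rw [hpG]; ring
        -- error 1
        have herr1 : ENNReal.ofReal t * ℙ {ω | Nt t < σ ω} ≤ ENNReal.ofReal (ε⁻¹) *
            (ENNReal.ofReal (ε*t) * ℙ {ω | ε*t < (σ ω : ℝ)}) := by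
          have hsp : ENNReal.ofReal t = ENNReal.ofReal (ε⁻¹) * ENNReal.ofReal (ε*t) := by
            rw [← ENNReal.ofReal_mul (by positivity)]
            congr 1
            field_simp
          rw [hsp, mul_assoc]
          refine mul_le_mul_right (mul_le_mul_right (measure_mono ?_) _) _
          intro ω hω
          simp only [Set.mem_setOf_eq] at hω ⊢
          have : (Nt t : ℝ) < (σ ω : ℝ) := by exact_mod_cast hω
          linarith
        -- error 2
        have herr2 : ENNReal.ofReal t * ((Nt t : ℝ≥0∞) * T * (p * p)) ≤
            ENNReal.ofReal (2*ε) * T *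
              ((ENNReal.ofReal t * ℙ {ω | t < Real.log (Q 1 ω)}) *
               (ENNReal.ofReal t * ℙ {ω | t < Real.log (Q 1 ω)})) := by
          have hNcast : (Nt t : ℝ≥0∞) ≤ ENNReal.ofReal (2*ε) * ENNReal.ofReal t := by
            rw [← ENNReal.ofReal_mul (by positivity), ← ENNReal.ofReal_natCast]
            exact ENNReal.ofReal_le_ofReal (by linarith [hNu])
          calc ENNReal.ofReal t * ((Nt t : ℝ≥0∞) * T * (p * p))
              ≤ ENNReal.ofReal t * ((ENNReal.ofReal (2*ε) * ENNReal.ofReal t) * T *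
                  (ℙ {ω | t < Real.log (Q 1 ω)} * ℙ {ω | t < Real.log (Q 1 ω)})) := by
                exact mul_le_mul_right (mul_le_mul (mul_le_mul_left hNcast T)
                  (mul_le_mul hpGt hpGt (zero_le) (zero_le)) (zero_le) (zero_le)) _
            _ = ENNReal.ofReal (2*ε) * T *
                  ((ENNReal.ofReal t * ℙ {ω | t < Real.log (Q 1 ω)}) *
                   (ENNReal.ofReal t * ℙ {ω | t < Real.log (Q 1 ω)})) := by ring
        -- combine
        calc Aε ≤ K t + δ := h1.le
          _ ≤ ENNReal.ofReal t * ((∑ j ∈ Finset.range (Nt t), ℙ {ω | j < σ ω}) * p) + δ :=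
              add_le_add_left hKle _
          _ ≤ (f t + ENNReal.ofReal t * ℙ {ω | Nt t < σ ω} +
                ENNReal.ofReal t * ((Nt t : ℝ≥0∞) * T * (p * p))) + δ := by
              refine add_le_add_left ?_ _
              calc ENNReal.ofReal t * ((∑ j ∈ Finset.range (Nt t), ℙ {ω | j < σ ω}) * p)
                  ≤ ENNReal.ofReal t * (ℙ {ω | t < Real.log (Qγ ω)} + ℙ {ω | Nt t < σ ω} +
                      (Nt t : ℝ≥0∞) * T * (p * p)) := mul_le_mul_right hcore _
                _ = f t + ENNReal.ofReal t * ℙ {ω | Nt t < σ ω} +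
                      ENNReal.ofReal t * ((Nt t : ℝ≥0∞) * T * (p * p)) := by
                    rw [hf_def]; ring
          _ ≤ (f t + δ + (Bε + δ)) + δ := by
              refine add_le_add_left (add_le_add (add_le_add_right ?_ _) ?_) _
              · exact herr1.trans h2
              · exact herr2.trans h3
          _ = f t + (Bε + δ) + δ + δ := by ring
      -- from eventual bound to liminf
      have hlim : Aε ≤ liminf f atTop + ((Bε + δ) + δ + δ) := by
        rw [← tsub_le_iff_right]
        refine le_liminf_of_le ?_ ?_
        · isBoundedDefault
        · filter_upwards [hmain] with t h
          rw [tsub_le_iff_right]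
          calc Aε ≤ f t + (Bε + δ) + δ + δ := h
            _ = f t + ((Bε + δ) + δ + δ) := by ring
      -- deficiency: s*T ≤ Aε + ofReal(2εc) * (s*T)
      have hdef : s * T ≤ Aε + ENNReal.ofReal (2*ε*c) * (s * T) := by
        have h1 : (1:ℝ) ≤ (1+2*ε*c)⁻¹ + 2*ε*c := by
          have hx : (0:ℝ) < 1+2*ε*c := by positivity
          rw [← sub_nonneg]
          have hk : (1+2*ε*c)⁻¹ + 2*ε*c - 1 = (2*ε*c)^2/(1+2*ε*c) := by
            field_simp; ring
          rw [hk]; positivity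
        calc s * T = ENNReal.ofReal 1 * (s * T) := by norm_num
          _ ≤ ENNReal.ofReal ((1+2*ε*c)⁻¹ + 2*ε*c) * (s * T) :=
              mul_le_mul_left (ENNReal.ofReal_le_ofReal h1) _
          _ = (cst + ENNReal.ofReal (2*ε*c)) * (s * T) := by
              rw [ENNReal.ofReal_add (by positivity) (by positivity)]
          _ = Aε + ENNReal.ofReal (2*ε*c) * (s * T) := by
              rw [hAe_def]; ring
      -- collect the epsilon terms into D
      have hcollect : Bε + ENNReal.ofReal (2*ε*c) * (s * T) ≤ ENNReal.ofReal ε * D := by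
        have hb : Bε = ENNReal.ofReal ε * (2 * T * (s * s)) := by
          rw [hBe_def, show (2*ε:ℝ) = ε*2 by ring, ENNReal.ofReal_mul hε.le]
          have : ENNReal.ofReal 2 = 2 := by norm_num
          rw [this]; ring
        have hco : ENNReal.ofReal (2*ε*c) * (s * T) ≤
            ENNReal.ofReal ε * ((ENNReal.ofReal (2*c) + 2) * (s * T)) := by
          rw [show (2*ε*c:ℝ) = ε*(2*c) by ring, ENNReal.ofReal_mul hε.le, mul_assoc]
          exact mul_le_mul_right (mul_le_mul_left (self_le_add_right _ _) _) _
        calc Bε + ENNReal.ofReal (2*ε*c) * (s * T)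
            ≤ ENNReal.ofReal ε * (2 * T * (s * s)) +
              ENNReal.ofReal ε * ((ENNReal.ofReal (2*c) + 2) * (s * T)) :=
              add_le_add hb.le hco
          _ = ENNReal.ofReal ε * D := by rw [hD_def]; ring
      calc s * T ≤ Aε + ENNReal.ofReal (2*ε*c) * (s * T) := hdef
        _ ≤ (liminf f atTop + ((Bε + δ) + δ + δ)) + ENNReal.ofReal (2*ε*c) * (s * T) :=
            add_le_add_left hlim _
        _ = liminf f atTop + (Bε + ENNReal.ofReal (2*ε*c) * (s * T)) + (δ + δ + δ) := by ring
        _ ≤ liminf f atTop + ENNReal.ofReal ε * D + (δ + δ + δ) := by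
            exact add_le_add_left (add_le_add_right hcollect _) _
    -- conclude
    refine tendsto_of_le_liminf_of_limsup_le ?_ ?_
    · -- s*T ≤ liminf f
      apply ENNReal.le_of_forall_pos_le_add
      intro η hη _
      have hηR : (0:ℝ) < (η:ℝ) := hη
      set KD : ℝ := D.toReal with hKD
      have hKD0 : (0:ℝ) ≤ KD := ENNReal.toReal_nonneg
      set ε : ℝ := min (1/2) ((η:ℝ)/(2*(KD+1))) with hε_def
      have hε : 0 < ε := lt_min (by norm_num) (by positivity)
      have hε2 : ε ≤ 1/2 := min_le_left _ _
      set δ : ℝ≥0∞ := ENNReal.ofReal ((η:ℝ)/6) with hδ_def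
      have hδ0 : 0 < δ := ENNReal.ofReal_pos.mpr (by positivity)
      have hδt : δ ≠ ⊤ := ENNReal.ofReal_ne_top
      have h := hinf ε hε hε2 δ hδ0 hδt
      have hεD : ENNReal.ofReal ε * D ≤ ENNReal.ofReal ((η:ℝ)/2) := by
        have hD : D = ENNReal.ofReal KD := by rw [hKD, ENNReal.ofReal_toReal hD_fin]
        rw [hD, ← ENNReal.ofReal_mul hε.le]
        refine ENNReal.ofReal_le_ofReal ?_
        have hεle : ε ≤ (η:ℝ)/(2*(KD+1)) := min_le_right _ _
        calc ε * KD ≤ ((η:ℝ)/(2*(KD+1))) * KD :=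
              mul_le_mul_of_nonneg_right hεle hKD0
          _ ≤ (η:ℝ)/2 := by
              rw [div_mul_eq_mul_div, div_le_div_iff₀ (by positivity) (by norm_num)]
              nlinarith
      have hδ3 : δ + δ + δ ≤ ENNReal.ofReal ((η:ℝ)/2) := by
        rw [hδ_def, ← ENNReal.ofReal_add (by positivity) (by positivity),
          ← ENNReal.ofReal_add (by positivity) (by positivity)]
        exact ENNReal.ofReal_le_ofReal (by linarith)
      calc s*T ≤ liminf f atTop + ENNReal.ofReal ε * D + (δ+δ+δ) := h
        _ ≤ liminf f atTop + ENNReal.ofReal ((η:ℝ)/2) + ENNReal.ofReal ((η:ℝ)/2) :=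
            add_le_add (add_le_add_right hεD _) hδ3
        _ = liminf f atTop + (ENNReal.ofReal ((η:ℝ)/2) + ENNReal.ofReal ((η:ℝ)/2)) := by ring
        _ = liminf f atTop + η := by
            rw [← ENNReal.ofReal_add (by positivity) (by positivity)]
            congr 1
            rw [show (η:ℝ)/2 + (η:ℝ)/2 = (η:ℝ) by ring]
            exact ENNReal.ofReal_coe_nnreal
    · -- limsup f ≤ s*T
      apply ENNReal.le_of_forall_pos_le_add
      intro η hη _
      have hηR : (0:ℝ) < (η:ℝ) := hη
      set KD : ℝ := D.toReal with hKD
      have hKD0 : (0:ℝ) ≤ KD := ENNReal.toReal_nonneg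
      set ε : ℝ := min (1/2) ((η:ℝ)/(KD+1)) with hε_def
      have hε : 0 < ε := lt_min (by norm_num) (by positivity)
      have hε2 : ε ≤ 1/2 := min_le_left _ _
      have hεD : ENNReal.ofReal ε * D ≤ (η : ℝ≥0∞) := by
        have hD : D = ENNReal.ofReal KD := by rw [hKD, ENNReal.ofReal_toReal hD_fin]
        rw [hD, ← ENNReal.ofReal_mul hε.le]
        have hεle : ε ≤ (η:ℝ)/(KD+1) := min_le_right _ _
        calc ENNReal.ofReal (ε * KD) ≤ ENNReal.ofReal ((η:ℝ)) := by
              refine ENNReal.ofReal_le_ofReal ?_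
              calc ε * KD ≤ ((η:ℝ)/(KD+1)) * KD := mul_le_mul_of_nonneg_right hεle hKD0
                _ ≤ (η:ℝ) := by
                    rw [div_mul_eq_mul_div, div_le_iff₀ (by positivity)]
                    nlinarith
          _ = (η : ℝ≥0∞) := ENNReal.ofReal_coe_nnreal
      calc limsup f atTop ≤ s * T + ENNReal.ofReal ε * D := hsup ε hε hε2
        _ ≤ s * T + η := add_le_add_right hεD _
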